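/- Let N, M, d, d' be positive natural numbers, let A be an N×N real matrix with all entries nonnegative, let ε be a real number with ε > -1, let W be a d×d' real matrix, let X be an N×d real feature matrix, and let S be a nonempty subset of {1,…,N}. Then for every M×M real matrix Â and every M×d real feature matrix X̂ there exists a vector p̂ ∈ ℝ^d such that z_{A,ε,W}(X') = z_{Â,ε,W}(X̂), where X' is the SUPT-prompted feature matrix obtained from X, S and p̂. (Universal capability of SUPT for a single-layer GIN: a prompt added only on a nonempty subset of nodes can reproduce the embedding of any prompted graph template, including ones with a different number of nodes and a different adjacency matrix, processed by the same pre-trained model.) -/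

import Mathlib

open Matrix BigOperators

/-- Single-layer GIN graph embedding with sum readout:
the `j'`-th entry is the sum of the rows of `(A + (1+ε)•I) * X * W`. -/
noncomputable def ginEmbed {N d d' : ℕ} (A : Matrix (Fin N) (Fin N) ℝ) (ε : ℝ)
    (W : Matrix (Fin d) (Fin d') ℝ) (X : Matrix (Fin N) (Fin d) ℝ) : Fin d' → ℝ :=
  fun j' => ∑ i, ((A + (1 + ε) • (1 : Matrix (Fin N) (Fin N) ℝ)) * X * W) i j'

/-- SUPT-prompted feature matrix: add the prompt vector `phat` to the rows indexed by `S`. -/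
noncomputable def suptPrompt {N d : ℕ} (X : Matrix (Fin N) (Fin d) ℝ) (S : Finset (Fin N))
    (phat : Fin d → ℝ) : Matrix (Fin N) (Fin d) ℝ :=
  Matrix.of fun i j => if i ∈ S then X i j + phat j else X i j

/-- GPF-prompted feature matrix: add the prompt vector `p` to every row. -/
noncomputable def gpfPrompt {N d : ℕ} (X : Matrix (Fin N) (Fin d) ℝ)
    (p : Fin d → ℝ) : Matrix (Fin N) (Fin d) ℝ :=
  Matrix.of fun i j => X i j + p j


/-- Rewrite the GIN embedding in terms of column sums of `A + (1+ε)•I`. -/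
lemma ginEmbed_eq_colsum {N d d' : ℕ} (A : Matrix (Fin N) (Fin N) ℝ) (ε : ℝ)
    (W : Matrix (Fin d) (Fin d') ℝ) (X : Matrix (Fin N) (Fin d) ℝ) :
    ginEmbed A ε W X = fun j' =>
      ∑ k, (∑ j, (∑ i, (A + (1 + ε) • (1 : Matrix (Fin N) (Fin N) ℝ)) i j) * X j k) * W k j' := by
  funext j'
  simp only [ginEmbed, Matrix.mul_apply, Finset.sum_mul]
  exact Finset.sum_comm.trans (Finset.sum_congr rfl fun x _ => Finset.sum_comm)

/-- Universal capability of SUPT (single-layer GIN): a prompt added only on a nonempty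
subset of nodes can reproduce the embedding of any prompted graph template, including
ones with a different number of nodes and a different adjacency matrix. -/
theorem supt_universal_capability
    (N M d d' : ℕ) (hN : 0 < N) (hM : 0 < M) (hd : 0 < d) (hd' : 0 < d')
    (A : Matrix (Fin N) (Fin N) ℝ) (hA : ∀ i k, 0 ≤ A i k)
    (ε : ℝ) (hε : -1 < ε)
    (W : Matrix (Fin d) (Fin d') ℝ)
    (X : Matrix (Fin N) (Fin d) ℝ)
    (S : Finset (Fin N)) (hS : S.Nonempty)
    (Ahat : Matrix (Fin M) (Fin M) ℝ)
    (Xhat : Matrix (Fin M) (Fin d) ℝ) :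
    ∃ phat : Fin d → ℝ,
      ginEmbed A ε W (suptPrompt X S phat) = ginEmbed Ahat ε W Xhat := by
  set B := A + (1 + ε) • (1 : Matrix (Fin N) (Fin N) ℝ) with hB
  set c : Fin N → ℝ := fun j => ∑ i, B i j with hc
  have hcpos : ∀ j, 0 < c j := by
    intro j
    have h1 : c j = (∑ i, A i j) + (1 + ε) := by
      simp [hc, hB, Matrix.add_apply, Matrix.smul_apply, Matrix.one_apply,
        Finset.sum_add_distrib, mul_ite, mul_one, mul_zero]
    rw [h1]
    have h2 : 0 ≤ ∑ i, A i j := Finset.sum_nonneg fun i _ => hA i j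
    linarith
  set C : ℝ := ∑ j ∈ S, c j with hCdef
  have hC : 0 < C := Finset.sum_pos (fun j _ => hcpos j) hS
  set s : Fin d → ℝ := fun k => ∑ j, c j * X j k with hs
  set t : Fin d → ℝ := fun k =>
    ∑ j, (∑ i, (Ahat + (1 + ε) • (1 : Matrix (Fin M) (Fin M) ℝ)) i j) * Xhat j k with ht
  refine ⟨fun k => (t k - s k) / C, ?_⟩
  funext j'
  rw [ginEmbed_eq_colsum, ginEmbed_eq_colsum]
  refine Finset.sum_congr rfl fun k _ => ?_
  congr 1
  have hrow : ∀ j, suptPrompt X S (fun k => (t k - s k) / C) j k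
      = X j k + (if j ∈ S then (t k - s k) / C else 0) := by
    intro j; simp only [suptPrompt, Matrix.of_apply]; split <;> simp
  calc ∑ j, c j * suptPrompt X S (fun k => (t k - s k) / C) j k
      = ∑ j, (c j * X j k + if j ∈ S then c j * ((t k - s k) / C) else 0) := by
        refine Finset.sum_congr rfl fun j _ => ?_
        rw [hrow, mul_add, mul_ite, mul_zero]
    _ = s k + ∑ j ∈ S, c j * ((t k - s k) / C) := by
        rw [Finset.sum_add_distrib, Finset.sum_ite_mem, Finset.univ_inter]
    _ = s k + C * ((t k - s k) / C) := by rw [← Finset.sum_mul]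
    _ = t k := by field_simp; ring
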